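/- Let C be a triangulated category equipped with a weight structure w, and let m ≤ n < n' be integers. If an object O of C is without weights m,…,n and also without weights n+1,…,n', then O is without weights m,…,n'. -/

import Mathlib

open CategoryTheory CategoryTheory.Limits CategoryTheory.Pretriangulated ZeroObject

universe v u

variable (C : Type u) [Category.{v} C] [HasZeroObject C] [Preadditive C] [HasShift C ℤ]
  [∀ n : ℤ, (shiftFunctor C n).Additive] [Pretriangulated C]

/-- A weight structure on a triangulated category `C`: a pair of retract-closed classes
`le = C_{w≤0}` and `ge = C_{w≥0}` satisfying semi-invariance with respect to translations,
orthogonality, and the existence of weight decompositions. -/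
structure WeightStructure where
  /-- the class `C_{w≤0}` -/
  le : Set C
  /-- the class `C_{w≥0}` -/
  ge : Set C
  /-- `C_{w≤0}` is closed under retracts -/
  le_retract : ∀ ⦃X Y : C⦄ (i : X ⟶ Y) (r : Y ⟶ X), i ≫ r = 𝟙 X → le Y → le X
  /-- `C_{w≥0}` is closed under retracts -/
  ge_retract : ∀ ⦃X Y : C⦄ (i : X ⟶ Y) (r : Y ⟶ X), i ≫ r = 𝟙 X → ge Y → ge X
  /-- `C_{w≤0} ⊆ C_{w≤0}[1]`, i.e. `X ∈ C_{w≤0} → X[-1] ∈ C_{w≤0}` -/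
  le_shift : ∀ ⦃X : C⦄, le X → le ((shiftFunctor C (-1 : ℤ)).obj X)
  /-- `C_{w≥0}[1] ⊆ C_{w≥0}`, i.e. `X ∈ C_{w≥0} → X[1] ∈ C_{w≥0}` -/
  ge_shift : ∀ ⦃X : C⦄, ge X → ge ((shiftFunctor C (1 : ℤ)).obj X)
  /-- orthogonality: `Hom(X, Y[1]) = 0` for `X ∈ C_{w≤0}`, `Y ∈ C_{w≥0}` -/
  orth : ∀ ⦃X Y : C⦄, le X → ge Y → ∀ f : X ⟶ (shiftFunctor C (1 : ℤ)).obj Y, f = 0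
  /-- existence of weight decompositions -/
  decomp : ∀ M : C, ∃ (X Y : C) (f : X ⟶ M) (g : M ⟶ Y)
      (h : Y ⟶ (shiftFunctor C (1 : ℤ)).obj X),
      Triangle.mk f g h ∈ (distTriang C) ∧ le X ∧ ge ((shiftFunctor C (-1 : ℤ)).obj Y)

variable {C}

namespace WeightStructure

/-- `X ∈ C_{w≤i} = C_{w≤0}[i]`, i.e. `X[-i] ∈ C_{w≤0}`. -/
def leDeg (w : WeightStructure C) (i : ℤ) (X : C) : Prop :=
  w.le ((shiftFunctor C (-i)).obj X)

/-- `X ∈ C_{w≥i} = C_{w≥0}[i]`, i.e. `X[-i] ∈ C_{w≥0}`. -/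
def geDeg (w : WeightStructure C) (i : ℤ) (X : C) : Prop :=
  w.ge ((shiftFunctor C (-i)).obj X)

/-- The triangle `A → M → B → A[1]` is an `m`-weight decomposition of `M`:
it is distinguished, `A ∈ C_{w≤m}` and `B ∈ C_{w≥m+1}`. -/
def IsWeightDecomp (w : WeightStructure C) (m : ℤ) {A M B : C}
    (f : A ⟶ M) (g : M ⟶ B) (h : B ⟶ (shiftFunctor C (1 : ℤ)).obj A) : Prop :=
  Triangle.mk f g h ∈ (distTriang C) ∧ w.leDeg m A ∧ w.geDeg (m + 1) B

/-- `g : M ⟶ N` kills weights `m,…,n`: there exist an `n`-weight decomposition of `M` and an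
`(m-1)`-weight decomposition of `N` such that the composite `w_{≤n}M → M → N → w_{≥m}N` is `0`. -/
def KillsWeights (w : WeightStructure C) (m n : ℤ) {M N : C} (g : M ⟶ N) : Prop :=
  ∃ (A B A' B' : C) (f : A ⟶ M) (p : M ⟶ B) (δ : B ⟶ (shiftFunctor C (1 : ℤ)).obj A)
    (f' : A' ⟶ N) (p' : N ⟶ B') (δ' : B' ⟶ (shiftFunctor C (1 : ℤ)).obj A'),
    w.IsWeightDecomp n f p δ ∧ w.IsWeightDecomp (m - 1) f' p' δ' ∧ f ≫ g ≫ p' = 0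

/-- `M` is without weights `m,…,n` if `𝟙 M` kills weights `m,…,n`. -/
def WithoutWeights (w : WeightStructure C) (m n : ℤ) (M : C) : Prop :=
  w.KillsWeights m n (𝟙 M)

end WeightStructure

/-- Theorem 2.1.1(6): if `O` is without weights `m,…,n` and without weights `n+1,…,n'`
(where `m ≤ n < n'`), then `O` is without weights `m,…,n'`. -/
theorem withoutWeights_glue (w : WeightStructure C) (m n n' : ℤ) (h1 : m ≤ n) (h2 : n < n')
    (O : C) (hO₁ : w.WithoutWeights m n O) (hO₂ : w.WithoutWeights (n + 1) n' O) :
    w.WithoutWeights m n' O := by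
  obtain ⟨A₁, B₁, A₁', B₁', f₁, p₁, δ₁, f₁', p₁', δ₁', hd₁, hd₁', hz₁⟩ := hO₁
  obtain ⟨A₂, B₂, A₂', B₂', f₂, p₂, δ₂, f₂', p₂', δ₂', hd₂, hd₂', hz₂⟩ := hO₂
  rw [show n + 1 - 1 = n by ring] at hd₂'
  -- Step 1: f₂ factors through f₂'
  obtain ⟨α, hα⟩ := Pretriangulated.Triangle.coyoneda_exact₂ _ hd₂'.1 f₂
    (by simp only [Category.id_comp] at hz₂; exact hz₂)
  -- Step 2: f₂' ≫ p₁ = 0 by orthogonality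
  have horth : f₂' ≫ p₁ = 0 := by
    have hA : w.le ((shiftFunctor C (-n)).obj A₂') := hd₂'.2.1
    have hB : w.ge ((shiftFunctor C (-(n + 1))).obj B₁) := hd₁.2.2
    have e := (shiftFunctorAdd' C (-(n + 1)) 1 (-n) (by ring)).app B₁
    have h0 : (shiftFunctor C (-n)).map (f₂' ≫ p₁) ≫ e.hom = 0 :=
      w.orth hA hB _
    have : (shiftFunctor C (-n)).map (f₂' ≫ p₁) = 0 := by
      rw [← cancel_mono e.hom, h0, zero_comp]
    apply (shiftFunctor C (-n)).map_injective
    simpa using this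
  -- Step 3: f₂' factors through f₁
  obtain ⟨β, hβ⟩ := Pretriangulated.Triangle.coyoneda_exact₂ _ hd₁.1 f₂' horth
  -- Conclude
  refine ⟨A₂, B₂, A₁', B₁', f₂, p₂, δ₂, f₁', p₁', δ₁', hd₂, hd₁', ?_⟩
  have hz₁' : f₁ ≫ p₁' = 0 := by simpa using hz₁
  simp only [Category.id_comp]
  rw [show f₂ = (α : A₂ ⟶ A₂') ≫ f₂' from hα]
  replace hβ : f₂' = (β : A₂' ⟶ A₁) ≫ f₁ := hβ
  rw [hβ]
  exact (Category.assoc α (β ≫ f₁) p₁').trans ((congrArg (fun x => α ≫ x) ((Category.assoc β f₁ p₁').trans ((congrArg (fun x => β ≫ x) hz₁').trans comp_zero))).trans comp_zero)
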